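/- For the M/M/∞ queue with exponential service times G(t) = 1 − e^{−t/α}, t ≥ 0, the peakedness p = B̄(1/α) equals (e^ρ − ρ − 1)/(ρ(e^ρ − 1)), where ρ = λα. -/

import Mathlib

open Real MeasureTheory Set

/-- For the M/M/∞ queue with exponential service times `G(t) = 1 - e^{-t/α}`,
the peakedness `p = B̄(1/α)` equals `(e^ρ - ρ - 1)/(ρ(e^ρ - 1))`, `ρ = λα`. -/
theorem stmt_2 (lam α ρ : ℝ) (hlam : 0 < lam) (hα : 0 < α) (hρ : ρ = lam * α) :
    1 + 1 / ρ -
      1 / (lam * ∫ t in Ioi (0:ℝ), Real.exp (-(t / α) -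
        lam * ∫ v in (0:ℝ)..t, (1 - (1 - Real.exp (-(v / α)))))) =
    (Real.exp ρ - ρ - 1) / (ρ * (Real.exp ρ - 1)) := by
  have hρ0 : 0 < ρ := by rw [hρ]; positivity
  -- inner integral
  have hinner : ∀ t : ℝ, (∫ v in (0:ℝ)..t, (1 - (1 - Real.exp (-(v / α)))))
      = α * (1 - Real.exp (-(t / α))) := by
    intro t
    have hd : ∀ v : ℝ, HasDerivAt (fun v : ℝ => -α * Real.exp (-(v / α)))
        (1 - (1 - Real.exp (-(v / α)))) v := by
      intro v
      have h1 : HasDerivAt (fun v : ℝ => -(v / α)) (-(1/α)) v := by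
        exact ((hasDerivAt_id' v).div_const α).neg
      have := ((h1.exp).const_mul (-α))
      refine HasDerivAt.congr_deriv this ?_; symm
      field_simp
      ring
    rw [intervalIntegral.integral_eq_sub_of_hasDerivAt (fun v _ => hd v)
      (by apply Continuous.intervalIntegrable; continuity)]
    simp [mul_sub]
    ring
  have hrw : ∀ t : ℝ, Real.exp (-(t / α) -
      lam * ∫ v in (0:ℝ)..t, (1 - (1 - Real.exp (-(v / α)))))
      = Real.exp (-(t / α) - ρ * (1 - Real.exp (-(t / α)))) := by
    intro t; rw [hinner, hρ]; ring_nf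
  -- the outer integral
  set F : ℝ → ℝ := fun t => -(α / ρ) * Real.exp (-(ρ * (1 - Real.exp (-(t / α)))))
  have hF : ∀ t : ℝ, HasDerivAt F (Real.exp (-(t / α) - ρ * (1 - Real.exp (-(t / α))))) t := by
    intro t
    have h1 : HasDerivAt (fun t : ℝ => -(t / α)) (-(1/α)) t := by
      exact ((hasDerivAt_id' t).div_const α).neg
    have h2 : HasDerivAt (fun t : ℝ => -(ρ * (1 - Real.exp (-(t / α)))))
        (-(ρ * (0 - Real.exp (-(t / α)) * (-(1/α))))) t := by
      exact (((hasDerivAt_const t (1:ℝ)).sub h1.exp).const_mul ρ).neg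
    have := (h2.exp).const_mul (-(α / ρ))
    refine HasDerivAt.congr_deriv this ?_; symm
    rw [sub_eq_add_neg, Real.exp_add]
    field_simp
    ring
  have hposint : ∫ t in Ioi (0:ℝ), Real.exp (-(t / α) - ρ * (1 - Real.exp (-(t / α))))
      = -(α / ρ) * Real.exp (-ρ) - F 0 := by
    apply MeasureTheory.integral_Ioi_of_hasDerivAt_of_tendsto
      (f := F)
    · exact Continuous.continuousWithinAt
        (continuous_const.mul (Continuous.rexp
          (by continuity : Continuous fun t : ℝ => -(ρ * (1 - Real.exp (-(t / α)))))))
    · exact fun x _ => hF x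
    · -- integrability: dominated by exp(-(t/α))
      have hint : IntegrableOn (fun t : ℝ => Real.exp (-(1/α) * t)) (Ioi 0) := by
        simpa using exp_neg_integrableOn_Ioi (0:ℝ) (b := 1/α) (by positivity)
      apply hint.mono' (Continuous.aestronglyMeasurable
        (by continuity : Continuous fun x : ℝ =>
          Real.exp (-(x / α) - ρ * (1 - Real.exp (-(x / α))))))
      filter_upwards [ae_restrict_mem measurableSet_Ioi] with t ht
      rw [Real.norm_eq_abs, abs_of_pos (Real.exp_pos _)]
      apply Real.exp_le_exp.2
      have h1 : Real.exp (-(t / α)) ≤ 1 := by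
        apply Real.exp_le_one_iff.2
        have : 0 < t := ht
        nlinarith [div_pos this hα]
      have h2 : (0:ℝ) ≤ ρ * (1 - Real.exp (-(t / α))) :=
        mul_nonneg hρ0.le (by linarith)
      have h3 : -(t/α) = -(1/α)*t := by ring
      linarith
    · -- tendsto
      have h1 : Filter.Tendsto (fun t : ℝ => Real.exp (-(t / α))) Filter.atTop (nhds 0) := by
        apply Real.tendsto_exp_atBot.comp
        apply Filter.tendsto_neg_atBot_iff.2
        exact Filter.Tendsto.atTop_div_const hα Filter.tendsto_id
      have : Filter.Tendsto F Filter.atTop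
          (nhds (-(α / ρ) * Real.exp (-(ρ * (1 - 0))))) := by
        apply Filter.Tendsto.const_mul
        exact (Real.continuous_exp.tendsto _).comp
          (((tendsto_const_nhds.sub h1).const_mul ρ).neg)
      simpa using this
  have hval : (∫ t in Ioi (0:ℝ), Real.exp (-(t / α) -
      lam * ∫ v in (0:ℝ)..t, (1 - (1 - Real.exp (-(v / α))))))
      = α / ρ * (1 - Real.exp (-ρ)) := by
    simp_rw [hrw]
    rw [hposint]
    simp [F]
    ring
  rw [hval]
  have hE : Real.exp (-ρ) = (Real.exp ρ)⁻¹ := Real.exp_neg ρ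
  have hE1 : 1 < Real.exp ρ := by simpa using Real.exp_lt_exp.2 hρ0
  have hEne : Real.exp ρ - 1 ≠ 0 := by linarith
  have hlamval : lam * (α / ρ * (1 - Real.exp (-ρ))) = 1 - (Real.exp ρ)⁻¹ := by
    rw [hE, hρ]; field_simp
  rw [hlamval]
  have hEpos : 0 < Real.exp ρ := Real.exp_pos ρ
  field_simp
  ring
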